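/- Let 0 < β < α ≤ 1. There exists a constant C = C(α, β) < ∞ such that for every d ≥ 1, every continuous path x : [0,1] → ℝ^d with ‖x‖_α < ∞, and every subdivision D of [0,1] with mesh |D|, one has sup_{0 ≤ s < t ≤ 1} |(x(t) − x^D(t)) − (x(s) − x^D(s))| / (t − s)^β ≤ C ‖x‖_α |D|^{α − β}. -/

import Mathlib

open MeasureTheory ProbabilityTheory Filter Set

noncomputable section

abbrev Vec (d : ℕ) := EuclideanSpace ℝ (Fin d)
abbrev Ten (d : ℕ) := EuclideanSpace ℝ (Fin d × Fin d)

/-- Elementary tensor `a ⊗ b` of two vectors in `ℝ^d`, realized in `ℝ^{d×d}`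
with the Euclidean (Hilbert–Schmidt) norm. -/
def tens {d : ℕ} (a b : Vec d) : Ten d := WithLp.toLp 2 (fun p => a p.1 * b p.2)

/-- The transposition map `π` with `π (a ⊗ b) = b ⊗ a`. -/
def tswap {d : ℕ} (z : Ten d) : Ten d := WithLp.toLp 2 (fun p => z (p.2, p.1))

/-- A subdivision `0 = t₀ < t₁ < ⋯ < t_N = 1` of `[0,1]`. -/
structure Subdivision : Type where
  N : ℕ
  pos : 0 < N
  t : ℕ → ℝ
  zero : t 0 = 0
  last : t N = 1
  mono : ∀ i, i < N → t i < t (i + 1)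

/-- The mesh `|D|` of a subdivision. -/
def Subdivision.mesh (D : Subdivision) : ℝ :=
  (Finset.range D.N).sup' (Finset.nonempty_range_iff.mpr D.pos.ne')
    (fun i => D.t (i + 1) - D.t i)

/-- `xD` is the piecewise linear interpolation of `x` along `D`. -/
def IsPL {d : ℕ} (D : Subdivision) (x xD : ℝ → Vec d) : Prop :=
  ∀ i, i < D.N → ∀ u ∈ Icc (D.t i) (D.t (i + 1)),
    xD u = x (D.t i) + ((u - D.t i) / (D.t (i + 1) - D.t i)) • (x (D.t (i + 1)) - x (D.t i))

/-- `xD'` is the (piecewise constant) derivative of the piecewise linear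
interpolation of `x` along `D`. -/
def IsPLDeriv {d : ℕ} (D : Subdivision) (x xD' : ℝ → Vec d) : Prop :=
  ∀ i, i < D.N → ∀ u ∈ Ioo (D.t i) (D.t (i + 1)),
    xD' u = (D.t (i + 1) - D.t i)⁻¹ • (x (D.t (i + 1)) - x (D.t i))

/-- `B` is a standard `d`-dimensional Brownian motion on `[0,1]`: a.s. continuous paths,
`B 0 = 0`, and the coordinates of all increments over `[0,1]` are jointly independent
centered Gaussians, the coordinates of the increment over `[s,t]` having variance `t - s`.
(Equivalently, the `d` coordinate processes are independent centered Gaussian processes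
with covariance `min s t`.) -/
structure IsBrownian (d : ℕ) {Ω : Type*} [MeasurableSpace Ω] (P : Measure Ω)
    (B : ℝ → Ω → Vec d) : Prop where
  meas : ∀ t, Measurable (B t)
  cont : ∀ᵐ ω ∂P, ContinuousOn (fun t => B t ω) (Icc 0 1)
  init : ∀ᵐ ω ∂P, B 0 ω = 0
  incr : ∀ s t : ℝ, 0 ≤ s → s ≤ t → t ≤ 1 → ∀ i : Fin d,
    Measure.map (fun ω => B t ω i - B s ω i) P = gaussianReal 0 (Real.toNNReal (t - s))
  indep : ∀ (n : ℕ) (τ : ℕ → ℝ), Monotone τ → (∀ k, τ k ∈ Icc (0 : ℝ) 1) →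
    iIndepFun
      (fun p : Fin n × Fin d => fun ω => B (τ (p.1.val + 1)) ω p.2 - B (τ p.1.val) ω p.2) P

section HolderAux

private lemma Subdiv_mono (D : Subdivision) : ∀ {i j}, i ≤ j → j ≤ D.N → D.t i ≤ D.t j := by
  intro i j hij hjN
  induction j with
  | zero => simp [Nat.le_zero.mp hij]
  | succ n ih =>
    rcases Nat.lt_or_ge i (n+1) with h | h
    · exact le_trans (ih (Nat.lt_succ_iff.mp h) (le_trans (Nat.le_succ n) hjN))
        (le_of_lt (D.mono n (Nat.lt_of_succ_le hjN)))
    · have : i = n+1 := le_antisymm hij h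
      simp [this]

private lemma mesh_ge (D : Subdivision) {i : ℕ} (hi : i < D.N) :
    D.t (i+1) - D.t i ≤ D.mesh :=
  Finset.le_sup' (fun i => D.t (i + 1) - D.t i) (Finset.mem_range.mpr hi)

private lemma locate (D : Subdivision) {u : ℝ} (h0 : 0 ≤ u) (h1 : u ≤ 1) :
    ∃ i, i < D.N ∧ D.t i ≤ u ∧ u ≤ D.t (i+1) := by
  classical
  set P := fun k => D.t k ≤ u with hP
  have hP0 : P 0 := by simp [hP, D.zero, h0]
  set i := Nat.findGreatest P D.N with hi
  have hiN : i ≤ D.N := Nat.findGreatest_le _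
  have hPi : P i := Nat.findGreatest_spec (Nat.zero_le _) hP0
  rcases Nat.lt_or_ge i D.N with h | h
  · refine ⟨i, h, hPi, ?_⟩
    have := Nat.findGreatest_is_greatest (lt_add_one i) (Nat.succ_le_of_lt h)
    exact le_of_not_ge this
  · have hiN' : i = D.N := le_antisymm hiN h
    have hu : u = 1 := le_antisymm h1 (by rw [← D.last, ← hiN']; exact hPi)
    refine ⟨D.N - 1, Nat.sub_lt D.pos one_pos, ?_, ?_⟩
    · rw [hu, ← D.last]; exact Subdiv_mono D (Nat.sub_le _ _) le_rfl
    · have hN : D.N - 1 + 1 = D.N := Nat.succ_pred_eq_of_pos D.pos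
      rw [hN, D.last, hu]

private lemma rpow_split (α β r A B : ℝ) (hβ : 0 < β) (hβα : β ≤ α) (hr : 0 ≤ r)
    (hA : r ≤ A) (hB : r ≤ B) : r ^ α ≤ A ^ (α - β) * B ^ β := by
  rcases eq_or_lt_of_le hr with h | h
  · rw [← h, Real.zero_rpow (by linarith : α ≠ 0)]
    have hA0 : 0 ≤ A := le_trans hr hA
    have hB0 : 0 ≤ B := le_trans hr hB
    positivity
  · have h1 : r ^ α = r ^ (α - β) * r ^ β := by
      rw [← Real.rpow_add h]; ring_nf
    rw [h1]
    exact mul_le_mul (Real.rpow_le_rpow hr hA (by linarith))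
      (Real.rpow_le_rpow hr hB hβ.le) (Real.rpow_nonneg hr _) (Real.rpow_nonneg (le_trans hr hA) _)

end HolderAux

/-- **Rate of convergence of piecewise linear interpolation in Hölder norm.**
Let `0 < β < α ≤ 1`. There is `C = C(α,β) < ∞` such that for every `d ≥ 1`, every continuous
path `x : [0,1] → ℝ^d` with `α`-Hölder seminorm at most `M`, and every subdivision `D` of
`[0,1]` with mesh `|D|`, one has
`sup_{0 ≤ s < t ≤ 1} |(x(t) − x^D(t)) − (x(s) − x^D(s))| / (t − s)^β ≤ C M |D|^{α−β}`. -/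
theorem holder_dist_piecewise_linear (α β : ℝ) (hβ0 : 0 < β) (hβα : β < α) (hα1 : α ≤ 1) :
    ∃ C : ℝ, ∀ d : ℕ, 1 ≤ d → ∀ (x xD : ℝ → Vec d) (D : Subdivision) (M : ℝ),
      ContinuousOn x (Icc 0 1) → 0 ≤ M →
      (∀ s t : ℝ, 0 ≤ s → s < t → t ≤ 1 → ‖x t - x s‖ ≤ M * (t - s) ^ α) →
      IsPL D x xD →
      ∀ s t : ℝ, 0 ≤ s → s < t → t ≤ 1 →
        ‖(x t - xD t) - (x s - xD s)‖ ≤ C * M * D.mesh ^ (α - β) * (t - s) ^ β := by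
  classical
  refine ⟨4, ?_⟩
  intro d _ x xD D M _ hM hHol hPL s t hs hst ht1
  have hα0 : 0 < α := hβ0.trans hβα
  have hol : ∀ a b : ℝ, 0 ≤ a → a ≤ b → b ≤ 1 → ‖x b - x a‖ ≤ M * (b - a) ^ α := by
    intro a b ha hab hb1
    rcases eq_or_lt_of_le hab with h | h
    · rw [← h]; simp [sub_self, Real.zero_rpow hα0.ne']
    · exact hHol a b ha h hb1
  have trange : ∀ k, k ≤ D.N → D.t k ∈ Icc (0:ℝ) 1 := fun k hk =>
    ⟨by rw [← D.zero]; exact Subdiv_mono D (Nat.zero_le _) hk,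
     by rw [← D.last]; exact Subdiv_mono D hk le_rfl⟩
  -- within one interval, x - xD is α-Hölder with constant 2M
  have claimB : ∀ i, i < D.N → ∀ a b, D.t i ≤ a → a ≤ b → b ≤ D.t (i+1) →
      ‖(x b - xD b) - (x a - xD a)‖ ≤ 2 * M * (b - a) ^ α := by
    intro i hi a b ha hab hb
    have hΔ : 0 < D.t (i+1) - D.t i := sub_pos.mpr (D.mono i hi)
    have hxa := hPL i hi a ⟨ha, le_trans hab hb⟩
    have hxb := hPL i hi b ⟨le_trans ha hab, hb⟩
    have hdiff : xD b - xD a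
        = ((b - a)/(D.t (i+1) - D.t i)) • (x (D.t (i+1)) - x (D.t i)) := by
      calc xD b - xD a
          = ((b - D.t i)/(D.t (i+1) - D.t i) - (a - D.t i)/(D.t (i+1) - D.t i)) •
              (x (D.t (i+1)) - x (D.t i)) := by rw [hxb, hxa, sub_smul]; abel
        _ = ((b - a)/(D.t (i+1) - D.t i)) • (x (D.t (i+1)) - x (D.t i)) := by
            congr 1; ring
    have key : (x b - xD b) - (x a - xD a)
        = (x b - x a) - ((b - a)/(D.t (i+1) - D.t i)) • (x (D.t (i+1)) - x (D.t i)) := by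
      rw [← hdiff]; abel
    rw [key]
    have h1 : ‖x b - x a‖ ≤ M * (b - a) ^ α :=
      hol a b (le_trans (trange i hi.le).1 ha) hab (le_trans hb (trange (i+1) hi).2)
    have hq : (0:ℝ) ≤ (b - a)/(D.t (i+1) - D.t i) := div_nonneg (by linarith) hΔ.le
    have h2 : ‖((b - a)/(D.t (i+1) - D.t i)) • (x (D.t (i+1)) - x (D.t i))‖
        = ((b - a)/(D.t (i+1) - D.t i)) * ‖x (D.t (i+1)) - x (D.t i)‖ := by
      rw [norm_smul, Real.norm_of_nonneg hq]
    have hv : ‖x (D.t (i+1)) - x (D.t i)‖ ≤ M * (D.t (i+1) - D.t i) ^ α :=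
      hol _ _ (trange i hi.le).1 (D.mono i hi).le (trange (i+1) hi).2
    have h3 : ((b - a)/(D.t (i+1) - D.t i)) * ‖x (D.t (i+1)) - x (D.t i)‖
        ≤ M * (b - a) ^ α := by
      rcases eq_or_lt_of_le hab with h | h
      · rw [← h]
        simp [sub_self, Real.zero_rpow hα0.ne']
      · have hr : 0 < b - a := sub_pos.mpr h
        have step1 : ((b - a)/(D.t (i+1) - D.t i)) * ‖x (D.t (i+1)) - x (D.t i)‖
            ≤ ((b - a)/(D.t (i+1) - D.t i)) * (M * (D.t (i+1) - D.t i) ^ α) :=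
          mul_le_mul_of_nonneg_left hv hq
        have hΔα : (D.t (i+1) - D.t i) ^ α = (D.t (i+1) - D.t i) ^ (α - 1) * (D.t (i+1) - D.t i) := by
          rw [← Real.rpow_add_one hΔ.ne']; ring_nf
        have hmono : (D.t (i+1) - D.t i) ^ (α - 1) ≤ (b - a) ^ (α - 1) :=
          Real.rpow_le_rpow_of_nonpos hr (by linarith) (by linarith)
        have hrα : (b - a) ^ α = (b - a) * (b - a) ^ (α - 1) := by
          nth_rewrite 1 [show α = 1 + (α - 1) by ring]
          rw [Real.rpow_add hr, Real.rpow_one]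
        have step2 : ((b - a)/(D.t (i+1) - D.t i)) * (M * (D.t (i+1) - D.t i) ^ α)
            ≤ M * (b - a) ^ α := by
          rw [hΔα, hrα]
          have : ((b - a)/(D.t (i+1) - D.t i)) * (M * ((D.t (i+1) - D.t i) ^ (α - 1) * (D.t (i+1) - D.t i)))
              = M * ((b - a) * (D.t (i+1) - D.t i) ^ (α - 1)) := by
            field_simp
          rw [this]
          have := mul_le_mul_of_nonneg_left hmono (le_of_lt hr)
          nlinarith
        linarith
    calc ‖(x b - x a) - ((b - a)/(D.t (i+1) - D.t i)) • (x (D.t (i+1)) - x (D.t i))‖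
        ≤ ‖x b - x a‖ + ‖((b - a)/(D.t (i+1) - D.t i)) • (x (D.t (i+1)) - x (D.t i))‖ :=
          norm_sub_le _ _
      _ ≤ 2 * M * (b - a) ^ α := by rw [h2]; linarith
  obtain ⟨i, hi, hsi, hsi'⟩ := locate D hs (hst.le.trans ht1)
  obtain ⟨j, hj, htj, htj'⟩ := locate D (hs.trans hst.le) ht1
  have hmesh0 : 0 < D.mesh := lt_of_lt_of_le (sub_pos.mpr (D.mono i hi)) (mesh_ge D hi)
  have hA0 : (0:ℝ) ≤ D.mesh ^ (α - β) := Real.rpow_nonneg hmesh0.le _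
  have hB0 : (0:ℝ) ≤ (t - s) ^ β := Real.rpow_nonneg (by linarith) _
  by_cases hcase : t ≤ D.t (i+1)
  · have h := claimB i hi s t hsi hst.le hcase
    have hts : t - s ≤ D.mesh := by
      have := mesh_ge D hi; linarith
    have hsplit := rpow_split α β (t - s) D.mesh (t - s) hβ0 hβα.le (by linarith) hts le_rfl
    have e1 := mul_le_mul_of_nonneg_left hsplit (by linarith : (0:ℝ) ≤ 2 * M)
    have hMAB : (0:ℝ) ≤ M * (D.mesh ^ (α - β) * (t - s) ^ β) := by positivity
    nlinarith
  · push_neg at hcase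
    have hij : i + 1 ≤ j := by
      by_contra h
      push_neg at h
      have : D.t (j+1) ≤ D.t (i+1) := Subdiv_mono D (by omega) hi
      linarith
    have hnode : ∀ k, k ≤ D.N → xD (D.t k) = x (D.t k) := by
      intro k hk
      rcases lt_or_eq_of_le hk with h | h
      · have hh := hPL k h (D.t k) ⟨le_rfl, (D.mono k h).le⟩
        rw [hh]; simp
      · have hN1 : D.N - 1 < D.N := Nat.sub_lt D.pos one_pos
        have hNe : D.N - 1 + 1 = D.N := Nat.succ_pred_eq_of_pos D.pos
        have hle : D.t (D.N - 1) ≤ D.t D.N := Subdiv_mono D (Nat.sub_le _ _) le_rfl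
        have hh := hPL (D.N - 1) hN1 (D.t D.N) (by rw [hNe]; exact ⟨hle, le_rfl⟩)
        rw [hNe] at hh
        have hΔ : D.t D.N - D.t (D.N - 1) ≠ 0 := by
          have := D.mono (D.N - 1) hN1; rw [hNe] at this; linarith
        rw [h, hh, div_self hΔ, one_smul]
        abel
    have h0j : (x (D.t j) - xD (D.t j)) = 0 := by rw [hnode j hj.le, sub_self]
    have h0i : (x (D.t (i+1)) - xD (D.t (i+1))) = 0 := by rw [hnode (i+1) hi, sub_self]
    have hsplit : (x t - xD t) - (x s - xD s)
        = ((x t - xD t) - (x (D.t j) - xD (D.t j)))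
          + ((x (D.t (i+1)) - xD (D.t (i+1))) - (x s - xD s)) := by
      rw [h0j, h0i]; abel
    rw [hsplit]
    have hb1 := claimB j hj (D.t j) t le_rfl htj htj'
    have hb2 := claimB i hi s (D.t (i+1)) hsi hsi' le_rfl
    have hstj : s ≤ D.t j := le_trans hsi' (Subdiv_mono D hij hj.le)
    have hr1 : t - D.t j ≤ D.mesh := by have := mesh_ge D hj; linarith
    have hr2 : D.t (i+1) - s ≤ D.mesh := by have := mesh_ge D hi; linarith
    have hp1 := rpow_split α β (t - D.t j) D.mesh (t - s) hβ0 hβα.le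
      (by linarith) hr1 (by linarith)
    have hp2 := rpow_split α β (D.t (i+1) - s) D.mesh (t - s) hβ0 hβα.le
      (by linarith) hr2 (by linarith)
    have e1 := mul_le_mul_of_nonneg_left hp1 (by linarith : (0:ℝ) ≤ 2 * M)
    have e2 := mul_le_mul_of_nonneg_left hp2 (by linarith : (0:ℝ) ≤ 2 * M)
    calc ‖((x t - xD t) - (x (D.t j) - xD (D.t j)))
            + ((x (D.t (i+1)) - xD (D.t (i+1))) - (x s - xD s))‖
        ≤ ‖(x t - xD t) - (x (D.t j) - xD (D.t j))‖
          + ‖(x (D.t (i+1)) - xD (D.t (i+1))) - (x s - xD s)‖ := norm_add_le _ _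
      _ ≤ 2 * M * (t - D.t j) ^ α + 2 * M * (D.t (i+1) - s) ^ α := add_le_add hb1 hb2
      _ ≤ 4 * M * D.mesh ^ (α - β) * (t - s) ^ β := by
          have heq : 4 * M * D.mesh ^ (α - β) * (t - s) ^ β
              = 2 * M * (D.mesh ^ (α - β) * (t - s) ^ β)
                + 2 * M * (D.mesh ^ (α - β) * (t - s) ^ β) := by ring
          rw [heq]; exact add_le_add e1 e2


end
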